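/- Let b be a positive integer, M a positive integer, Ω > 0, and let Φ_1, …, Φ_M be i.i.d. real random variables uniformly distributed on [−π/2^b, π/2^b). Then E[|Σ_{m=1}^{M} √Ω · e^{iΦ_m}|²] = M·Ω·(1 + (M−1)·Q), where Q = ((2^b/π)·sin(π/2^b))². -/

import Mathlib

open MeasureTheory ProbabilityTheory Real

/-- Beamforming-gain identity: for i.i.d. quantization errors `Φ m` uniform on
`[-π/2^b, π/2^b)`, `E[|Σ_{m=1}^M √Ω·e^{iΦ_m}|²] = M·Ω·(1 + (M-1)·Q)` where
`Q = ((2^b/π)·sin(π/2^b))²`. -/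
theorem beamforming_gain_los
    {Ωs : Type*} [MeasurableSpace Ωs] (μ : Measure Ωs) [IsProbabilityMeasure μ]
    (b : ℕ) (hb : 0 < b) (M : ℕ) (hM : 0 < M) (Ω : ℝ) (hΩ : 0 < Ω)
    (Φ : Fin M → Ωs → ℝ) (hmeas : ∀ m, Measurable (Φ m))
    (hindep : iIndepFun Φ μ)
    (hunif : ∀ m, Measure.map (Φ m) μ =
      ENNReal.ofReal ((2 : ℝ) ^ b / (2 * π)) •
        volume.restrict (Set.Ico (-(π / 2 ^ b)) (π / 2 ^ b))) :
    (∫ ω, ‖∑ m, (Real.sqrt Ω : ℂ) * Complex.exp (Complex.I * (Φ m ω : ℂ))‖ ^ 2 ∂μ) =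
      (M : ℝ) * Ω * (1 + ((M : ℝ) - 1) * ((2 : ℝ) ^ b / π * Real.sin (π / 2 ^ b)) ^ 2) := by
  set a : ℝ := π / 2 ^ b with ha
  have ha0 : 0 < a := div_pos Real.pi_pos (by positivity)
  set c : ℝ := (2 : ℝ) ^ b / (2 * π) with hc
  have hc0 : 0 ≤ c := by positivity
  -- marginal integrals
  have key : ∀ (f : ℝ → ℝ), Measurable f → ∀ m : Fin M,
      ∫ ω, f (Φ m ω) ∂μ = c * ∫ x in Set.Ico (-a) a, f x := by
    intro f hf m
    rw [← integral_map (hmeas m).aemeasurable hf.aestronglyMeasurable, hunif m,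
      integral_smul_measure, ENNReal.toReal_ofReal hc0, smul_eq_mul]
  have hIcoIoc : ∀ (f : ℝ → ℝ), (∫ x in Set.Ico (-a) a, f x) = ∫ x in (-a)..a, f x := by
    intro f
    rw [MeasureTheory.integral_Ico_eq_integral_Ioo, intervalIntegral.integral_of_le (by linarith),
      MeasureTheory.integral_Ioc_eq_integral_Ioo]
  have hcsa : c * (2 * Real.sin a) = (2:ℝ) ^ b / π * Real.sin a := by
    rw [hc]; field_simp
  have hcos : ∀ m, ∫ ω, Real.cos (Φ m ω) ∂μ = (2:ℝ) ^ b / π * Real.sin a := by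
    intro m
    rw [key _ Real.measurable_cos m, hIcoIoc, integral_cos, Real.sin_neg, ← hcsa]; ring
  have hsin : ∀ m, ∫ ω, Real.sin (Φ m ω) ∂μ = 0 := by
    intro m
    rw [key _ Real.measurable_sin m, hIcoIoc, integral_sin, Real.cos_neg]
    simp
  -- integrability of products of bounded functions
  have hint : ∀ (f g : ℝ → ℝ), Measurable f → Measurable g →
      (∀ x, |f x| ≤ 1) → (∀ x, |g x| ≤ 1) → ∀ m n : Fin M,
      Integrable (fun ω => f (Φ m ω) * g (Φ n ω)) μ := by
    intro f g hfm hgm hfb hgb m n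
    refine Integrable.mono' (integrable_const 1)
      (((hfm.comp (hmeas m)).mul (hgm.comp (hmeas n))).aestronglyMeasurable) ?_
    filter_upwards with ω
    rw [Real.norm_eq_abs, abs_mul]
    exact mul_le_one₀ (hfb _) (abs_nonneg _) (hgb _)
  -- pointwise expansion of |·|²
  have hpt : ∀ ω, ‖∑ m, (Real.sqrt Ω : ℂ) * Complex.exp (Complex.I * (Φ m ω : ℂ))‖ ^ 2
      = Ω * ∑ m, ∑ n, (Real.cos (Φ m ω) * Real.cos (Φ n ω) + Real.sin (Φ m ω) * Real.sin (Φ n ω)) := by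
    intro ω
    rw [← Finset.mul_sum, norm_mul, mul_pow, Complex.norm_real, Real.norm_eq_abs,
      abs_of_nonneg (Real.sqrt_nonneg Ω), Real.sq_sqrt hΩ.le, Complex.sq_norm]
    congr 1
    rw [Complex.normSq_apply, Complex.re_sum, Complex.im_sum]
    have hre : ∀ m : Fin M, (Complex.exp (Complex.I * (Φ m ω : ℂ))).re = Real.cos (Φ m ω) := by
      intro m; rw [mul_comm, Complex.exp_ofReal_mul_I_re]
    have him : ∀ m : Fin M, (Complex.exp (Complex.I * (Φ m ω : ℂ))).im = Real.sin (Φ m ω) := by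
      intro m; rw [mul_comm, Complex.exp_ofReal_mul_I_im]
    simp only [hre, him]
    rw [Finset.sum_mul_sum, Finset.sum_mul_sum, ← Finset.sum_add_distrib]
    refine Finset.sum_congr rfl fun m _ => ?_
    rw [← Finset.sum_add_distrib]
  have hInt2 : ∀ m n : Fin M, Integrable
      (fun ω => Real.cos (Φ m ω) * Real.cos (Φ n ω) + Real.sin (Φ m ω) * Real.sin (Φ n ω)) μ :=
    fun m n =>
      (hint _ _ Real.measurable_cos Real.measurable_cos (fun x => Real.abs_cos_le_one x)
        (fun x => Real.abs_cos_le_one x) m n).add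
      (hint _ _ Real.measurable_sin Real.measurable_sin (fun x => Real.abs_sin_le_one x)
        (fun x => Real.abs_sin_le_one x) m n)
  simp only [hpt]
  rw [MeasureTheory.integral_const_mul,
    integral_finset_sum _ (fun m _ => integrable_finset_sum _ (fun n _ => hInt2 m n))]
  have heq : ∀ m : Fin M, (∫ ω, ∑ n : Fin M,
      (Real.cos (Φ m ω) * Real.cos (Φ n ω) + Real.sin (Φ m ω) * Real.sin (Φ n ω)) ∂μ)
      = ∑ n : Fin M, ∫ ω,
      (Real.cos (Φ m ω) * Real.cos (Φ n ω) + Real.sin (Φ m ω) * Real.sin (Φ n ω)) ∂μ :=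
    fun m => integral_finset_sum _ (fun n _ => hInt2 m n)
  simp only [heq]
  have hterm : ∀ m n : Fin M,
      (∫ ω, (Real.cos (Φ m ω) * Real.cos (Φ n ω) + Real.sin (Φ m ω) * Real.sin (Φ n ω)) ∂μ)
      = if m = n then 1 else ((2:ℝ) ^ b / π * Real.sin a) ^ 2 := by
    intro m n
    by_cases hmn : m = n
    · subst hmn
      simp only [if_pos rfl]
      have : ∀ ω, Real.cos (Φ m ω) * Real.cos (Φ m ω) + Real.sin (Φ m ω) * Real.sin (Φ m ω) = 1 := by
        intro ω
        have := Real.sin_sq_add_cos_sq (Φ m ω)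
        nlinarith
      simp only [this]
      simp
    · rw [if_neg hmn]
      rw [integral_add (hint _ _ Real.measurable_cos Real.measurable_cos
          (fun x => Real.abs_cos_le_one x) (fun x => Real.abs_cos_le_one x) m n)
          (hint _ _ Real.measurable_sin Real.measurable_sin
          (fun x => Real.abs_sin_le_one x) (fun x => Real.abs_sin_le_one x) m n)]
      have hind := hindep.indepFun hmn
      have hc2 : (∫ ω, Real.cos (Φ m ω) * Real.cos (Φ n ω) ∂μ)
          = (∫ ω, Real.cos (Φ m ω) ∂μ) * ∫ ω, Real.cos (Φ n ω) ∂μ := by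
        have := (hind.comp Real.measurable_cos Real.measurable_cos).integral_mul_eq_mul_integral
          ((Real.measurable_cos.comp (hmeas m)).aestronglyMeasurable)
          ((Real.measurable_cos.comp (hmeas n)).aestronglyMeasurable)
        simpa [Function.comp, Pi.mul_apply] using this
      have hs2 : (∫ ω, Real.sin (Φ m ω) * Real.sin (Φ n ω) ∂μ)
          = (∫ ω, Real.sin (Φ m ω) ∂μ) * ∫ ω, Real.sin (Φ n ω) ∂μ := by
        have := (hind.comp Real.measurable_sin Real.measurable_sin).integral_mul_eq_mul_integral
          ((Real.measurable_sin.comp (hmeas m)).aestronglyMeasurable)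
          ((Real.measurable_sin.comp (hmeas n)).aestronglyMeasurable)
        simpa [Function.comp, Pi.mul_apply] using this
      rw [hc2, hs2, hcos m, hcos n, hsin m, hsin n]
      ring
  have hsum : (∑ m : Fin M, ∑ n : Fin M,
      (∫ ω, (Real.cos (Φ m ω) * Real.cos (Φ n ω) + Real.sin (Φ m ω) * Real.sin (Φ n ω)) ∂μ))
      = (M : ℝ) * (1 + ((M : ℝ) - 1) * ((2:ℝ) ^ b / π * Real.sin a) ^ 2) := by
    simp only [hterm]
    set Q : ℝ := ((2:ℝ) ^ b / π * Real.sin a) ^ 2 with hQ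
    have hrow : ∀ m : Fin M, (∑ n : Fin M, if m = n then (1:ℝ) else Q)
        = 1 + ((M : ℝ) - 1) * Q := by
      intro m
      have : (∑ n : Fin M, if m = n then (1:ℝ) else Q)
          = ∑ n : Fin M, (Q + if m = n then 1 - Q else 0) := by
        refine Finset.sum_congr rfl fun n _ => ?_
        by_cases h : m = n <;> simp [h]
      rw [this, Finset.sum_add_distrib, Finset.sum_const, Finset.sum_ite_eq]
      simp [Finset.card_univ]
      ring
    simp only [hrow, Finset.sum_const, Finset.card_univ, Fintype.card_fin, nsmul_eq_mul]
  rw [hsum]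
  ring
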